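/- A monotone function ψ : Spec R → ℤ is a t-function (that is, for every minimal inclusion of primes 𝔭 ⊊ 𝔮, one has ψ(𝔭) ≤ ψ(𝔮) ≤ ψ(𝔭) + 1) remains monotone after mutation at a specialization-closed set W, but need not remain a t-function; concretely, for R = ℤ, ψ the constant function 0, and W = {(2)} together with U-data where (2) ∈ U, an explicit mutation produces a function taking value 2 at a maximal prime over a minimal prime of value 0, violating the t-function condition. -/

import Mathlib

open scoped Classical in
/-- The (right) mutation of a function ψ : Spec R → ℤ at a subset W ⊆ Spec R. -/
noncomputable def mutate {R : Type*} [CommRing R] (W : Set (PrimeSpectrum R))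
    (ψ : PrimeSpectrum R → ℤ) : PrimeSpectrum R → ℤ :=
  fun p => if p ∈ W then ψ p + 1 else ψ p

/-- ψ is a t-function: for every minimal (covering) inclusion of primes 𝔭 ⊊ 𝔮 one has
ψ(𝔭) ≤ ψ(𝔮) ≤ ψ(𝔭) + 1. -/
def IsTFun {R : Type*} [CommRing R] (ψ : PrimeSpectrum R → ℤ) : Prop :=
  ∀ p q : PrimeSpectrum R, p ⋖ q → ψ p ≤ ψ q ∧ ψ q ≤ ψ p + 1

/-- mutation at a specialization-closed set preserves monotonicity, but need
not preserve the t-function property: for R = ℤ there is a t-function ψ and a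
specialization-closed W whose mutation takes value 2 at a maximal prime covering a
minimal prime of value 0, hence is not a t-function. -/
theorem mutation_preserves_monotone_not_tfun :
    (∀ (R : Type*) [CommRing R] (ψ : PrimeSpectrum R → ℤ) (W : Set (PrimeSpectrum R)),
      Monotone ψ → IsUpperSet W → Monotone (mutate W ψ)) ∧
    ∃ (ψ : PrimeSpectrum ℤ → ℤ) (W : Set (PrimeSpectrum ℤ)) (p q : PrimeSpectrum ℤ),
      Monotone ψ ∧ IsTFun ψ ∧ IsUpperSet W ∧
      IsMin p ∧ IsMax q ∧ p ⋖ q ∧ ψ p = 0 ∧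
      mutate W ψ p = 0 ∧ mutate W ψ q = 2 ∧ ¬ IsTFun (mutate W ψ) := by
  constructor
  · intro R _ ψ W hmono hup a b hab
    unfold mutate
    by_cases ha : a ∈ W
    · rw [if_pos ha, if_pos (hup hab ha)]
      exact add_le_add_left (hmono hab) 1
    · rw [if_neg ha]
      by_cases hb : b ∈ W
      · rw [if_pos hb]; exact le_trans (hmono hab) (by omega)
      · rw [if_neg hb]; exact hmono hab
  · classical
    set ψ : PrimeSpectrum ℤ → ℤ := fun x => if x.asIdeal = ⊥ then 0 else 1 with hψ
    set W : Set (PrimeSpectrum ℤ) := {x | x.asIdeal ≠ ⊥} with hW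
    have htwo : Prime (2 : ℤ) := Int.prime_two
    set p : PrimeSpectrum ℤ := ⟨⊥, Ideal.bot_prime⟩ with hp
    set q : PrimeSpectrum ℤ := ⟨Ideal.span {2},
      (Ideal.span_singleton_prime htwo.ne_zero).mpr htwo⟩ with hq
    have hle : ∀ x y : PrimeSpectrum ℤ, x ≤ y ↔ x.asIdeal ≤ y.asIdeal := fun x y =>
      (PrimeSpectrum.asIdeal_le_asIdeal x y).symm
    have hqbot : q.asIdeal ≠ ⊥ := fun h =>
      htwo.ne_zero (Ideal.span_singleton_eq_bot.mp h)
    have hmono : Monotone ψ := by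
      intro a b hab
      simp only [hψ]
      by_cases hb : b.asIdeal = ⊥
      · have : a.asIdeal = ⊥ := le_bot_iff.mp (hb ▸ (hle a b).mp hab)
        simp [this, hb]
      · by_cases ha : a.asIdeal = ⊥ <;> simp [ha, hb]
    have hψbound : ∀ x, 0 ≤ ψ x ∧ ψ x ≤ 1 := by
      intro x; simp only [hψ]; split <;> omega
    have htf : IsTFun ψ := by
      intro a b hab
      refine ⟨hmono hab.1.le, ?_⟩
      have := hψbound a
      have := hψbound b
      omega
    have hupW : IsUpperSet W := by
      intro a b hab ha
      simp only [hW, Set.mem_setOf_eq] at ha ⊢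
      intro hb
      exact ha (le_bot_iff.mp (hb ▸ (hle a b).mp hab))
    have hpmin : IsMin p := by
      intro x hx
      rw [hle]; exact bot_le
    have hqmax : IsMax q := by
      intro x hx
      have hmax : q.asIdeal.IsMaximal := by haveI := q.isPrime; exact IsPrime.to_maximal_ideal hqbot
      rw [hle] at hx ⊢
      exact le_of_eq (hmax.eq_of_le x.isPrime.ne_top hx).symm
    have hpq : p < q := by
      rw [lt_iff_le_and_ne]
      refine ⟨(hle p q).mpr bot_le, ?_⟩
      intro h
      exact hqbot (by rw [← h])
    have hcov : p ⋖ q := by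
      refine ⟨hpq, ?_⟩
      intro c hc hcq
      have hcbot : c.asIdeal ≠ ⊥ := by
        intro h
        exact absurd (PrimeSpectrum.ext h) hc.ne'
      have : c.asIdeal.IsMaximal := by haveI := c.isPrime; exact IsPrime.to_maximal_ideal hcbot
      have hle' : c.asIdeal ≤ q.asIdeal := (hle c q).mp hcq.le
      exact hcq.ne (PrimeSpectrum.ext (this.eq_of_le q.isPrime.ne_top hle'))
    refine ⟨ψ, W, p, q, hmono, htf, hupW, hpmin, hqmax, hcov, ?_, ?_, ?_, ?_⟩
    · simp [hψ, hp]
    · simp [mutate, hW, hψ, hp]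
    · simp [mutate, hW, hψ, hq, hqbot]
    · intro h
      have := (h p q hcov).2
      simp only [mutate, hW, hψ] at this
      revert this
      simp [hp, hqbot]
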